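/- arXiv:1802.01973 — 3 statements merged into one kernel-verified Lean document; each statement's English description precedes it below -/
import Mathlib

section
/- Let W ∈ L(H) be a positive operator, S ⊆ H a closed subspace, and T the shorted operator of W to S. Then the orthogonal complement of the image W(ker T) equals the orthogonal complement of the image W(S), i.e. (W(ker T))^⊥ = (W(S))^⊥ as subspaces of H. -/
open ContinuousLinearMap
open scoped ComplexInnerProductSpace

set_option maxHeartbeats 1000000
set_option synthInstance.maxHeartbeats 400000

noncomputable section

variable {H : Type*} [NormedAddCommGroup H] [InnerProductSpace ℂ H] [CompleteSpace H]

/-- `M(W,S)`: the set of operators `X` with `0 ≤ X ≤ W` (Loewner order) and `range X ⊆ S^⊥`. -/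
def MSet (W : H →L[ℂ] H) (S : Submodule ℂ H) : Set (H →L[ℂ] H) :=
  {X | X.IsPositive ∧ (W - X).IsPositive ∧ LinearMap.range ((X : H →L[ℂ] H) : H →ₗ[ℂ] H) ≤ Sᗮ}

/-- `T` is the shorted operator of `W` to `S`, i.e. the maximum of `M(W,S)` in the Loewner
order. -/
def IsShorted (W : H →L[ℂ] H) (S : Submodule ℂ H) (T : H →L[ℂ] H) : Prop :=
  T ∈ MSet W S ∧ ∀ X ∈ MSet W S, (T - X).IsPositive

/-- The minus order: `A ⁻≤ B` iff there are bounded idempotents `P, Q` with `A = PB` and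
`A* = QB*`. -/
def MinusLE (A B : H →L[ℂ] H) : Prop :=
  ∃ P Q : H →L[ℂ] H, IsIdempotentElem P ∧ IsIdempotentElem Q ∧
    A = P ∘L B ∧ adjoint A = Q ∘L adjoint B

/-- The pair `(W, N)` is compatible: there is a bounded idempotent `Q` with range `N` such that
`WQ` is selfadjoint. -/
def Compatible (W : H →L[ℂ] H) (N : Submodule ℂ H) : Prop :=
  ∃ Q : H →L[ℂ] H, IsIdempotentElem Q ∧ LinearMap.range ((Q : H →L[ℂ] H) : H →ₗ[ℂ] H) = N ∧ IsSelfAdjoint (W ∘L Q)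

/-- `M⁻(W,S)`: operators `X` with `X ⁻≤ W`, `range X ⊆ S^⊥` and `range X* ⊆ S^⊥`. -/
def MMinusSet (W : H →L[ℂ] H) (S : Submodule ℂ H) : Set (H →L[ℂ] H) :=
  {X | MinusLE X W ∧ LinearMap.range ((X : H →L[ℂ] H) : H →ₗ[ℂ] H) ≤ Sᗮ ∧ LinearMap.range ((adjoint X : H →L[ℂ] H) : H →ₗ[ℂ] H) ≤ Sᗮ}

/-- `X₀` is a `W`-inverse of `M` in `R(C)`: for every `x`, `X₀ x` is a `W`-weighted least squares
solution of `M z = C x`. -/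
def WInverseIn (W M C X₀ : H →L[ℂ] H) : Prop :=
  ∀ x z : H, (⟪W (M (X₀ x) - C x), M (X₀ x) - C x⟫).re ≤ (⟪W (M z - C x), M z - C x⟫).re

/-- The left weighted star order `A ₋*_W≤ B`. -/
def LStarW (W A B : H →L[ℂ] H) : Prop :=
  LinearMap.range ((B : H →L[ℂ] H) : H →ₗ[ℂ] H) = LinearMap.range ((A : H →L[ℂ] H) : H →ₗ[ℂ] H) ⊔ LinearMap.range ((B - A : H →L[ℂ] H) : H →ₗ[ℂ] H) ∧
  LinearMap.range ((A : H →L[ℂ] H) : H →ₗ[ℂ] H) ⊓ LinearMap.range ((B - A : H →L[ℂ] H) : H →ₗ[ℂ] H) = ⊥ ∧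
  LinearMap.range ((B - A : H →L[ℂ] H) : H →ₗ[ℂ] H) ≤ LinearMap.ker ((adjoint A ∘L W : H →L[ℂ] H) : H →ₗ[ℂ] H)

/-- The right weighted star order `A ≤*_W B`. -/
def RStarW (W A B : H →L[ℂ] H) : Prop :=
  LinearMap.range ((adjoint B : H →L[ℂ] H) : H →ₗ[ℂ] H) =
    LinearMap.range ((adjoint A : H →L[ℂ] H) : H →ₗ[ℂ] H) ⊔ LinearMap.range ((adjoint B - adjoint A : H →L[ℂ] H) : H →ₗ[ℂ] H) ∧
  LinearMap.range ((adjoint A : H →L[ℂ] H) : H →ₗ[ℂ] H) ⊓ LinearMap.range ((adjoint B - adjoint A : H →L[ℂ] H) : H →ₗ[ℂ] H) = ⊥ ∧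
  LinearMap.range ((adjoint B - adjoint A : H →L[ℂ] H) : H →ₗ[ℂ] H) ≤ LinearMap.ker ((A ∘L W : H →L[ℂ] H) : H →ₗ[ℂ] H)

/-- The weighted star order `A *_W≤ B`. -/
def StarW (W A B : H →L[ℂ] H) : Prop :=
  LStarW W A B ∧ RStarW W A B

/-- `(W(ker T))^⊥ = (W(S))^⊥` for the shorted operator `T` of `W` to `S`. -/
theorem stmt2 (W T : H →L[ℂ] H) (S : Submodule ℂ H) (hS : IsClosed (S : Set H))
    (hW : W.IsPositive) (hT : IsShorted W S T) :
    ((LinearMap.ker ((T : H →L[ℂ] H) : H →ₗ[ℂ] H)).map ((W : H →L[ℂ] H) : H →ₗ[ℂ] H))ᗮ = (S.map ((W : H →L[ℂ] H) : H →ₗ[ℂ] H))ᗮ := by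
  -- square root of W
  have h0 : (0 : H →L[ℂ] H) ≤ W := (nonneg_iff_isPositive W).2 hW
  set A : H →L[ℂ] H := CFC.sqrt W with hAdef
  have hA2 : A * A = W := CFC.sqrt_mul_sqrt_self W h0
  have hApos : A.IsPositive := (nonneg_iff_isPositive A).1 (CFC.sqrt_nonneg W)
  have hAadj : adjoint A = A := hApos.isSelfAdjoint.adjoint_eq
  have hAmove : ∀ u v : H, ⟪A u, v⟫ = ⟪u, A v⟫ := by
    intro u v
    conv_lhs => rw [← hAadj]
    exact adjoint_inner_left A v u
  have hWapp : ∀ z : H, W z = A (A z) := by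
    intro z; rw [← hA2, ContinuousLinearMap.mul_apply]
  have hTadj : adjoint T = T := hT.1.1.isSelfAdjoint.adjoint_eq
  have hWadj : adjoint W = W := hW.isSelfAdjoint.adjoint_eq
  -- S ≤ ker T
  have hSker : S ≤ LinearMap.ker (T : H →ₗ[ℂ] H) := by
    intro s hs
    have h1 : T (T s) ∈ Sᗮ := hT.1.2.2 ⟨T s, rfl⟩
    have h2 : ⟪T s, T s⟫ = 0 := by
      calc ⟪T s, T s⟫ = ⟪adjoint T s, T s⟫ := by rw [hTadj]
        _ = ⟪s, T (T s)⟫ := adjoint_inner_left T (T s) s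
        _ = 0 := (Submodule.mem_orthogonal S _).1 h1 s hs
    exact LinearMap.mem_ker.2 (inner_self_eq_zero.1 h2)
  -- the projection P onto U = (A S)ᗮ
  set U : Submodule ℂ H := (S.map (A : H →ₗ[ℂ] H))ᗮ with hUdef
  set P : H →L[ℂ] H := U.subtypeL ∘L Submodule.orthogonalProjectionOnto U with hPdef
  have hPU : ∀ z : H, P z ∈ U := fun z => (Submodule.orthogonalProjectionOnto U z).2
  have hPadj : adjoint P = P := (isSelfAdjoint_starProjection U).adjoint_eq
  have hPsub : ∀ z : H, z - P z ∈ Uᗮ := fun z =>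
    Submodule.sub_starProjection_mem_orthogonal (K := U) z
  have hPnorm : ∀ z : H, RCLike.re ⟪P z, z⟫ = ‖P z‖ ^ 2 := by
    intro z
    have h1 : ⟪P z, z - P z⟫ = 0 :=
      (Submodule.mem_orthogonal U _).1 (hPsub z) (P z) (hPU z)
    have h2 : ⟪P z, z⟫ = ⟪P z, P z⟫ := by
      have := inner_sub_right (𝕜 := ℂ) (P z) z (P z)
      rw [h1] at this
      linear_combination -this
    rw [h2, inner_self_eq_norm_sq]
  have hPle : ∀ z : H, ‖P z‖ ^ 2 ≤ ‖z‖ ^ 2 := by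
    intro z
    have h1 : ‖P z‖ ^ 2 ≤ ‖P z‖ * ‖z‖ := by
      rw [← hPnorm z]
      calc RCLike.re ⟪P z, z⟫ ≤ ‖(⟪P z, z⟫ : ℂ)‖ := RCLike.re_le_norm _
        _ ≤ ‖P z‖ * ‖z‖ := norm_inner_le_norm _ _
    nlinarith [norm_nonneg (P z), norm_nonneg z]
  have hPpos : P.IsPositive := by
    refine ⟨isSelfAdjoint_iff_isSymmetric.1 (isSelfAdjoint_starProjection U), fun z => ?_⟩
    rw [reApplyInnerSelf_apply, hPnorm z]
    positivity
  -- the candidate operator T₀ = A P A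
  set T₀ : H →L[ℂ] H := A ∘L P ∘L A with hT0def
  have hT0app : ∀ z : H, T₀ z = A (P (A z)) := fun z => rfl
  have hT0inner : ∀ z : H, RCLike.re ⟪T₀ z, z⟫ = ‖P (A z)‖ ^ 2 := by
    intro z
    rw [hT0app, hAmove (P (A z)) z, ← hPnorm (A z)]
  have hT0pos : T₀.IsPositive := by
    have := hPpos.conj_adjoint A
    rwa [hAadj] at this
  have hWT0 : (W - T₀).IsPositive := by
    refine ⟨isSelfAdjoint_iff_isSymmetric.1 (hW.isSelfAdjoint.sub hT0pos.isSelfAdjoint), fun z => ?_⟩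
    rw [reApplyInnerSelf_apply, sub_apply, inner_sub_left, map_sub]
    have hw : RCLike.re ⟪W z, z⟫ = ‖A z‖ ^ 2 := by
      rw [hWapp z, hAmove (A z) z, inner_self_eq_norm_sq]
    rw [hw, hT0inner z]
    have := hPle (A z)
    linarith
  have hT0range : LinearMap.range (T₀ : H →ₗ[ℂ] H) ≤ Sᗮ := by
    rintro _ ⟨z, rfl⟩
    rw [Submodule.mem_orthogonal]
    intro u hu
    rw [ContinuousLinearMap.coe_coe, hT0app, ← hAmove u (P (A z))]
    exact (Submodule.mem_orthogonal (S.map (A : H →ₗ[ℂ] H)) _).1 (hPU (A z)) (A u)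
      (Submodule.mem_map_of_mem hu)
  have hTT0 : (T - T₀).IsPositive := hT.2 T₀ ⟨hT0pos, hWT0, hT0range⟩
  -- conclude
  refine le_antisymm (Submodule.orthogonal_le (Submodule.map_mono hSker)) ?_
  intro y hy
  rw [Submodule.mem_orthogonal]
  intro u hu
  obtain ⟨x, hx, rfl⟩ := Submodule.mem_map.1 hu
  have hx' : T x = 0 := LinearMap.mem_ker.1 hx
  -- P (A x) = 0
  have hre : RCLike.re ⟪T₀ x, x⟫ ≤ 0 := by
    have h1 := hTT0.2 x
    rw [reApplyInnerSelf_apply, sub_apply, inner_sub_left, map_sub, hx'] at h1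
    simp only [inner_zero_left, map_zero] at h1
    linarith
  have hPAx : P (A x) = 0 := by
    have h1 : ‖P (A x)‖ ^ 2 ≤ 0 := by rw [← hT0inner x]; exact hre
    have h2 : ‖P (A x)‖ = 0 := by nlinarith [norm_nonneg (P (A x))]
    exact norm_eq_zero.1 h2
  have hAxU : A x ∈ Uᗮ := by
    have := hPsub (A x)
    rwa [hPAx, sub_zero] at this
  have hAyU : A y ∈ U := by
    rw [hUdef, Submodule.mem_orthogonal]
    rintro _ ⟨s, hs, rfl⟩
    calc ⟪A s, A y⟫ = ⟪s, A (A y)⟫ := hAmove s (A y)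
      _ = ⟪s, W y⟫ := by rw [← hWapp]
      _ = ⟪adjoint W s, y⟫ := (adjoint_inner_left W y s).symm
      _ = ⟪W s, y⟫ := by rw [hWadj]
      _ = 0 := (Submodule.mem_orthogonal (S.map (W : H →ₗ[ℂ] H)) y).1 hy (W s)
        (Submodule.mem_map_of_mem hs)
  calc ⟪W x, y⟫ = ⟪A (A x), y⟫ := by rw [hWapp]
    _ = ⟪A x, A y⟫ := hAmove (A x) y
    _ = 0 := inner_eq_zero_symm.1 ((Submodule.mem_orthogonal U (A x)).1 hAxU (A y) hAyU)
end
end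

section
/- Let W ∈ L(H) be a positive operator and A, B ∈ L(H) such that ker W ∩ closure(range A) = {0} and the pair (W, closure(range A)) is compatible. Then A ₋*_W≤ B if and only if range A ⊆ range B and A*WA = A*WB. -/
open ContinuousLinearMap
open scoped ComplexInnerProductSpace

noncomputable section

variable {H : Type*} [NormedAddCommGroup H] [InnerProductSpace ℂ H] [CompleteSpace H]

lemma wzero_aux (W : H →L[ℂ] H) (hW : W.IsPositive) (y : H)
    (h : (⟪W y, y⟫ : ℂ) = 0) : W y = 0 := by
  set x := W y with hx
  have hadj : adjoint W = W := hW.isSelfAdjoint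
  have hWyx : (⟪x, x⟫ : ℂ) = (‖x‖ : ℂ)^2 := inner_self_eq_norm_sq_to_K x
  have hWxy : (⟪W x, y⟫ : ℂ) = (‖x‖ : ℂ)^2 := by
    have hs : (⟪W x, y⟫ : ℂ) = ⟪x, W y⟫ := by
      nth_rewrite 1 [← hadj]; exact adjoint_inner_left W y x
    rw [hs, ← hx, hWyx]
  have key : ∀ t : ℝ, 0 ≤ t^2 * (⟪W x, x⟫ : ℂ).re + 2 * t * ‖x‖^2 := by
    intro t
    have h0 := hW.2 (y + (t : ℂ) • x)
    rw [reApplyInnerSelf_apply] at h0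
    have hexp : (⟪W (y + (t:ℂ) • x), y + (t:ℂ) • x⟫ : ℂ)
        = ⟪W y, y⟫ + (t:ℂ) * ⟪W y, x⟫ + (t:ℂ) * ⟪W x, y⟫ + (t:ℂ)^2 * ⟪W x, x⟫ := by
      rw [map_add, map_smul, inner_add_left, inner_add_right, inner_add_right,
        inner_smul_left, inner_smul_right, inner_smul_left, inner_smul_right]
      simp only [Complex.conj_ofReal]
      ring
    rw [hexp] at h0
    have hWy_x : (⟪W y, x⟫ : ℂ) = (‖x‖ : ℂ)^2 := by rw [← hx, hWyx]
    rw [h, hWy_x, hWxy] at h0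
    simp only [map_add, map_zero, RCLike.re_to_complex, ← Complex.ofReal_pow, Complex.re_ofReal_mul, Complex.ofReal_re] at h0
    linarith
  set a := (⟪W x, x⟫ : ℂ).re with ha'
  set b := ‖x‖^2 with hb'
  have ha : 0 ≤ a := hW.2 x
  have hb : 0 ≤ b := by positivity
  have hb0 : b = 0 := by
    by_contra hne
    have h2 := key (-(b/(a+1)))
    have h3 : (-(b/(a+1)))^2 * a + 2 * (-(b/(a+1))) * b = -(b^2*(a+2))/(a+1)^2 := by
      field_simp
      ring
    rw [h3] at h2
    have hpos : 0 < b := lt_of_le_of_ne hb (Ne.symm hne)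
    have hd : (0:ℝ) < (a+1)^2 := by positivity
    have hnum := (le_div_iff₀ hd).mp h2
    nlinarith [mul_pos hpos hpos]
  have : ‖x‖ = 0 := by
    have := hb0
    simpa [hb'] using pow_eq_zero_iff (n := 2) (by norm_num) |>.mp this
  simpa [hx] using norm_eq_zero.mp this

/-- if `ker W ∩ closure (range A) = {0}` and `(W, closure (range A))` is
compatible, then `A ₋*_W≤ B` iff `range A ⊆ range B` and `A*WA = A*WB`. -/
theorem stmt14 (W A B : H →L[ℂ] H) (hW : W.IsPositive)
    (h1 : LinearMap.ker ((W : H →L[ℂ] H) : H →ₗ[ℂ] H) ⊓ (LinearMap.range ((A : H →L[ℂ] H) : H →ₗ[ℂ] H)).topologicalClosure = ⊥)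
    (h2 : Compatible W (LinearMap.range ((A : H →L[ℂ] H) : H →ₗ[ℂ] H)).topologicalClosure) :
    LStarW W A B ↔
      LinearMap.range ((A : H →L[ℂ] H) : H →ₗ[ℂ] H) ≤ LinearMap.range ((B : H →L[ℂ] H) : H →ₗ[ℂ] H) ∧
        adjoint A ∘L (W ∘L A) = adjoint A ∘L (W ∘L B) := by
  constructor
  · rintro ⟨hr, _, hker⟩
    refine ⟨hr ▸ le_sup_left, ?_⟩
    ext x
    have hm : (B - A) x ∈ LinearMap.ker ((adjoint A ∘L W : H →L[ℂ] H) : H →ₗ[ℂ] H) :=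
      hker (LinearMap.mem_range_self ((B - A : H →L[ℂ] H) : H →ₗ[ℂ] H) x)
    simp only [LinearMap.mem_ker, ContinuousLinearMap.coe_coe, coe_comp', Function.comp_apply, sub_apply, map_sub] at hm
    simp only [coe_comp', Function.comp_apply]
    have := sub_eq_zero.mp hm
    linear_combination (norm := module) this.symm
  · rintro ⟨hAB, heq⟩
    have hker : ∀ x, adjoint A (W ((B - A) x)) = 0 := by
      intro x
      have := congrFun (congrArg (fun T : H →L[ℂ] H => (T : H → H)) heq) x
      simp only [coe_comp', Function.comp_apply] at this
      simp [sub_apply, map_sub, this]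
    refine ⟨?_, ?_, ?_⟩
    · apply le_antisymm
      · rintro y ⟨x, rfl⟩
        exact Submodule.mem_sup.2 ⟨A x, LinearMap.mem_range_self _ x,
          (B - A) x, LinearMap.mem_range_self _ x, by simp⟩
      · refine sup_le hAB ?_
        rintro y ⟨x, rfl⟩
        simpa using sub_mem (LinearMap.mem_range_self (B : H →ₗ[ℂ] H) x) (hAB (LinearMap.mem_range_self (A : H →ₗ[ℂ] H) x))
    · rw [Submodule.eq_bot_iff]
      rintro y ⟨⟨u, hu⟩, ⟨v, hv⟩⟩
      simp only [ContinuousLinearMap.coe_coe] at hu hv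
      have hWy : W y = 0 := by
        apply wzero_aux W hW
        have h0 : adjoint A (W y) = 0 := by rw [← hv]; exact hker v
        rw [← hu]
        calc (⟪W (A u), A u⟫ : ℂ) = ⟪adjoint A (W (A u)), u⟫ := (adjoint_inner_left A _ _).symm
          _ = 0 := by rw [hu, h0]; simp
      have hmem : y ∈ LinearMap.ker ((W : H →L[ℂ] H) : H →ₗ[ℂ] H) ⊓ (LinearMap.range ((A : H →L[ℂ] H) : H →ₗ[ℂ] H)).topologicalClosure := by
        refine ⟨hWy, Submodule.le_topologicalClosure _ ?_⟩
        exact ⟨u, hu⟩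
      rw [h1] at hmem
      exact hmem
    · rintro y ⟨x, rfl⟩
      simp only [LinearMap.mem_ker, coe_comp', Function.comp_apply]
      exact hker x
end
end

section
/- Let W ∈ L(H) be a positive operator and A, B ∈ L(H) such that range(A + B) is closed, the pair (W, range(A + B)) is compatible, and A ₋*_W≤ A + B. Let T_{A+B}, T_A, T_B denote the shorted operators of W to the ranges of A + B, A and B respectively (i.e. the maxima in the Loewner order of the sets {X ∈ L(H) : 0 ≤ X ≤ W, range X ⊆ (range R)^⊥} for R = A+B, A, B). Then W − T_{A+B} = (W − T_A) + (W − T_B). -/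
set_option maxHeartbeats 1000000
set_option synthInstance.maxHeartbeats 1000000


open ContinuousLinearMap
open scoped ComplexInnerProductSpace

noncomputable section

variable {H : Type*} [NormedAddCommGroup H] [InnerProductSpace ℂ H] [CompleteSpace H]

section Aux

private lemma exists_sqrt_pkg {W : H →L[ℂ] H} (hW : W.IsPositive) :
    ∃ S : H →L[ℂ] H, (∀ x, W x = S (S x)) ∧ (∀ v, ‖S v‖ ^ 2 = (⟪W v, v⟫).re) ∧
      ‖S‖ * ‖S‖ = ‖W‖ := by
  have h0 : 0 ≤ W := W.nonneg_iff_isPositive.mpr hW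
  set S := CFC.sqrt W with hS
  have hSnn : (0 : H →L[ℂ] H) ≤ S := CFC.sqrt_nonneg W
  have hSsa : IsSelfAdjoint S := ((S.nonneg_iff_isPositive).mp hSnn).isSelfAdjoint
  have hmul : S * S = W := CFC.sqrt_mul_sqrt_self W h0
  have happ : ∀ x, W x = S (S x) := by
    intro x
    have := DFunLike.congr_fun hmul x
    simpa [ContinuousLinearMap.mul_apply] using this.symm
  have hnorm : ∀ v, ‖S v‖ ^ 2 = (⟪W v, v⟫).re := by
    intro v
    have h1 : ⟪W v, v⟫ = ⟪S v, S v⟫ := by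
      rw [happ v]
      exact hSsa.isSymmetric (S v) v
    rw [h1]
    have h2 : RCLike.re ⟪S v, S v⟫ = ‖S v‖ ^ 2 := inner_self_eq_norm_sq (S v)
    simpa using h2.symm
  refine ⟨S, happ, hnorm, ?_⟩
  have hns : ‖star S * S‖ = ‖S‖ * ‖S‖ := CStarRing.norm_star_mul_self
  rw [← hns, hSsa.star_eq, hmul]

private lemma pos_app_zero {X : H →L[ℂ] H} (hX : X.IsPositive) {v : H}
    (h : (⟪X v, v⟫).re = 0) : X v = 0 := by
  obtain ⟨S, happ, hnorm, -⟩ := exists_sqrt_pkg hX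
  have h1 : ‖S v‖ ^ 2 = 0 := by rw [hnorm, h]
  have h2 : S v = 0 := by
    have := pow_eq_zero_iff (n := 2) (by norm_num) |>.mp h1
    exact norm_eq_zero.mp this
  rw [happ, h2, map_zero]

end Aux

/-- if `range (A+B)` is closed, `(W, range (A+B))` is compatible and
`A ₋*_W≤ A + B`, then `W - T_{A+B} = (W - T_A) + (W - T_B)` for the shorted operators to
the ranges of `A + B`, `A`, `B`. -/
theorem stmt17 (W A B TAB TA TB : H →L[ℂ] H) (hW : W.IsPositive)
    (hAB : IsClosed (LinearMap.range ((A + B : H →L[ℂ] H) : H →ₗ[ℂ] H) : Set H))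
    (hcomp : Compatible W (LinearMap.range ((A + B : H →L[ℂ] H) : H →ₗ[ℂ] H)))
    (hlw : LStarW W A (A + B))
    (hTAB : IsShorted W (LinearMap.range ((A + B : H →L[ℂ] H) : H →ₗ[ℂ] H)) TAB)
    (hTA : IsShorted W (LinearMap.range ((A : H →L[ℂ] H) : H →ₗ[ℂ] H)) TA)
    (hTB : IsShorted W (LinearMap.range ((B : H →L[ℂ] H) : H →ₗ[ℂ] H)) TB) :
    W - TAB = (W - TA) + (W - TB) := by
  classical
  obtain ⟨Q, hQi, hQr, hQsa⟩ := hcomp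
  have hBA : A + B - A = B := add_sub_cancel_left A B
  have hsup : LinearMap.range ((A + B : H →L[ℂ] H) : H →ₗ[ℂ] H) = LinearMap.range ((A : H →L[ℂ] H) : H →ₗ[ℂ] H) ⊔ LinearMap.range ((B : H →L[ℂ] H) : H →ₗ[ℂ] H) := by
    have h := hlw.1; rwa [hBA] at h
  have hdisj : LinearMap.range ((A : H →L[ℂ] H) : H →ₗ[ℂ] H) ⊓ LinearMap.range ((B : H →L[ℂ] H) : H →ₗ[ℂ] H) = ⊥ := by
    have h := hlw.2.1; rwa [hBA] at h
  have hker : LinearMap.range ((B : H →L[ℂ] H) : H →ₗ[ℂ] H) ≤ LinearMap.ker ((adjoint A ∘L W : H →L[ℂ] H) : H →ₗ[ℂ] H) := by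
    have h := hlw.2.2; rwa [hBA] at h
  set MA := LinearMap.range ((A : H →L[ℂ] H) : H →ₗ[ℂ] H) with hMAdef
  set MB := LinearMap.range ((B : H →L[ℂ] H) : H →ₗ[ℂ] H) with hMBdef
  set N := LinearMap.range ((A + B : H →L[ℂ] H) : H →ₗ[ℂ] H) with hNdef
  -- basic selfadjointness facts
  have hWsa : IsSelfAdjoint W := hW.isSelfAdjoint
  have Wsymm : ∀ x y : H, ⟪W x, y⟫ = ⟪x, W y⟫ := fun x y => hWsa.isSymmetric x y
  have hpos : ∀ (T : H →L[ℂ] H), T.IsPositive → ∀ v, 0 ≤ (⟪T v, v⟫).re := by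
    intro T hT v
    simpa [ContinuousLinearMap.reApplyInnerSelf] using hT.2 v
  have hpos' : ∀ (T : H →L[ℂ] H), IsSelfAdjoint T → (∀ v, 0 ≤ (⟪T v, v⟫).re) →
      T.IsPositive := fun T h1 h2 =>
    ⟨ContinuousLinearMap.isSelfAdjoint_iff_isSymmetric.mp h1, fun v => by simpa [ContinuousLinearMap.reApplyInnerSelf] using h2 v⟩
  -- idempotent facts
  have hQQ : ∀ m, Q (Q m) = Q m := fun m => by
    simpa [ContinuousLinearMap.mul_apply] using DFunLike.congr_fun hQi.eq m
  have hQfix : ∀ n, n ∈ N → Q n = n := by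
    intro n hn
    rw [← hQr] at hn
    obtain ⟨m, rfl⟩ := hn
    exact hQQ m
  have hQxN : ∀ x, Q x ∈ N := fun x => by rw [← hQr]; exact LinearMap.mem_range_self (Q : H →ₗ[ℂ] H) x
  have hQu : ∀ x, Q (x - Q x) = 0 := fun x => by rw [map_sub, hQQ, sub_self]
  -- key orthogonality coming from W Q selfadjoint
  have hQW : ∀ u n, Q u = 0 → Q n = n → ⟪u, W n⟫ = 0 := by
    intro u n hu hn
    have h1 : ⟪u, W n⟫ = ⟪u, (W ∘L Q) n⟫ := by rw [comp_apply, hn]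
    have h2 := hQsa.isSymmetric u n
    simp only [ContinuousLinearMap.coe_coe] at h2
    rw [h1, ← h2, comp_apply, hu, map_zero, inner_zero_left]
  have hQW' : ∀ u n, Q u = 0 → Q n = n → ⟪W n, u⟫ = 0 := by
    intro u n hu hn
    rw [← inner_conj_symm, hQW u n hu hn, map_zero]
  have hQW'' : ∀ u n, Q u = 0 → Q n = n → ⟪W u, n⟫ = 0 := fun u n hu hn => by
    rw [Wsymm]; exact hQW u n hu hn
  -- W-orthogonality of MA and MB
  have horth : ∀ b ∈ MB, ∀ a ∈ MA, ⟪W b, a⟫ = 0 := by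
    rintro b hb a ⟨y, rfl⟩
    have h0 : adjoint A (W b) = 0 := by
      have := LinearMap.mem_ker.mp (hker hb)
      simpa [comp_apply] using this
    rw [ContinuousLinearMap.coe_coe, ← adjoint_inner_left, h0, inner_zero_left]
  have horth' : ∀ a ∈ MA, ∀ b ∈ MB, ⟪W a, b⟫ = 0 := by
    intro a ha b hb
    rw [Wsymm, ← inner_conj_symm, horth b hb a ha, map_zero]
  have hMAN : MA ≤ N := by rw [hsup]; exact le_sup_left
  have hMBN : MB ≤ N := by rw [hsup]; exact le_sup_right
  -- the splitting of Q x along MA ⊕ MB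
  have hsplitex : ∀ x : H, ∃ b, b ∈ MB ∧ Q x - b ∈ MA := by
    intro x
    have hx : Q x ∈ MA ⊔ MB := by rw [← hsup]; exact hQxN x
    obtain ⟨a, ha, b, hb, hab⟩ := Submodule.mem_sup.mp hx
    refine ⟨b, hb, ?_⟩
    rw [← hab]
    simpa using ha
  choose β hβB hβA using hsplitex
  have huniq : ∀ {n b₁ b₂ : H}, b₁ ∈ MB → b₂ ∈ MB → n - b₁ ∈ MA → n - b₂ ∈ MA →
      b₁ = b₂ := by
    intro n b₁ b₂ h1 h2 h1' h2'
    have hmem : b₁ - b₂ ∈ MA ⊓ MB := by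
      refine Submodule.mem_inf.mpr ⟨?_, sub_mem h1 h2⟩
      have h3 := sub_mem h2' h1'
      have heq : n - b₂ - (n - b₁) = b₁ - b₂ := by abel
      rwa [heq] at h3
    rw [hdisj] at hmem
    have := (Submodule.mem_bot ℂ).mp hmem
    exact sub_eq_zero.mp this
  have hβadd : ∀ x y, β (x + y) = β x + β y := by
    intro x y
    refine huniq (hβB (x + y)) (add_mem (hβB x) (hβB y)) (hβA (x + y)) ?_
    have heq : Q (x + y) - (β x + β y) = (Q x - β x) + (Q y - β y) := by
      rw [map_add]; abel
    rw [heq]; exact add_mem (hβA x) (hβA y)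
  have hβsmul : ∀ (c : ℂ) (x), β (c • x) = c • β x := by
    intro c x
    refine huniq (hβB (c • x)) (Submodule.smul_mem _ c (hβB x)) (hβA (c • x)) ?_
    have heq : Q (c • x) - c • β x = c • (Q x - β x) := by rw [map_smul, smul_sub]
    rw [heq]; exact Submodule.smul_mem _ c (hβA x)
  have hQβ : ∀ x, Q (β x) = β x := fun x => hQfix _ (hMBN (hβB x))
  have hQα : ∀ x, Q (Q x - β x) = Q x - β x := fun x => hQfix _ (hMAN (hβA x))
  -- quadratic form expansions
  have hexp : ∀ u n, Q u = 0 → Q n = n →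
      ⟪W (u + n), u + n⟫ = ⟪W u, u⟫ + ⟪W n, n⟫ := by
    intro u n hu hn
    rw [map_add, inner_add_left, inner_add_right, inner_add_right,
      hQW'' u n hu hn, hQW' u n hu hn]
    ring
  have hexp2 : ∀ a ∈ MA, ∀ b ∈ MB, ⟪W (a + b), a + b⟫ = ⟪W a, a⟫ + ⟪W b, b⟫ := by
    intro a ha b hb
    rw [map_add, inner_add_left, inner_add_right, inner_add_right,
      horth' a ha b hb, horth b hb a ha]
    ring
  -- the bounded operator DB : x ↦ W (β x)
  obtain ⟨S, hSapp, hSnorm, hSS⟩ := exists_sqrt_pkg hW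
  have hbound : ∀ x, ‖W (β x)‖ ≤ ‖W‖ * ‖Q‖ * ‖x‖ := by
    intro x
    have h1 : ‖W (β x)‖ ≤ ‖S‖ * ‖S (β x)‖ := by rw [hSapp]; exact S.le_opNorm _
    have hsum : ⟪W (Q x), Q x⟫ = ⟪W (Q x - β x), Q x - β x⟫ + ⟪W (β x), β x⟫ := by
      have h := hexp2 _ (hβA x) _ (hβB x)
      rwa [sub_add_cancel] at h
    have hge := hpos W hW (Q x - β x)
    have h2 : ‖S (β x)‖ ^ 2 ≤ ‖S (Q x)‖ ^ 2 := by
      rw [hSnorm, hSnorm, hsum]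
      simp only [Complex.add_re]
      linarith
    have h3 : ‖S (β x)‖ ≤ ‖S (Q x)‖ := by
      nlinarith [norm_nonneg (S (β x)), norm_nonneg (S (Q x))]
    have h4 : ‖S (Q x)‖ ≤ ‖S‖ * (‖Q‖ * ‖x‖) :=
      (S.le_opNorm _).trans (mul_le_mul_of_nonneg_left (Q.le_opNorm x) (norm_nonneg S))
    calc ‖W (β x)‖ ≤ ‖S‖ * ‖S (β x)‖ := h1
    _ ≤ ‖S‖ * (‖S‖ * (‖Q‖ * ‖x‖)) := by
        refine mul_le_mul_of_nonneg_left (h3.trans h4) (norm_nonneg S)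
    _ = ‖W‖ * ‖Q‖ * ‖x‖ := by rw [← hSS]; ring
  let DBl : H →ₗ[ℂ] H :=
    { toFun := fun x => W (β x)
      map_add' := fun x y => by
        show W (β (x + y)) = W (β x) + W (β y)
        rw [hβadd, map_add]
      map_smul' := fun c x => by
        show W (β (c • x)) = c • W (β x)
        rw [hβsmul, map_smul] }
  let DB : H →L[ℂ] H := DBl.mkContinuous (‖W‖ * ‖Q‖) hbound
  have hDBapp : ∀ x, DB x = W (β x) := fun x => rfl
  have hDAapp : ∀ x, (W ∘L Q - DB) x = W (Q x - β x) := by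
    intro x
    rw [sub_apply, comp_apply, hDBapp, ← map_sub]
  -- the main construction : candidates for shorted operators
  have main : ∀ (M₁ M₂ : Submodule ℂ H) (D : H →L[ℂ] H) (γ : H → H),
      M₁ ≤ N → M₂ ≤ N →
      (∀ b ∈ M₂, ∀ a ∈ M₁, ⟪W b, a⟫ = 0) →
      (∀ z, γ z ∈ M₂) → (∀ z, Q z - γ z ∈ M₁) → (∀ z, D z = W (γ z)) →
      ((W - W ∘L Q + D) ∈ MSet W M₁ ∧
        ∀ z, ⟪(W - W ∘L Q + D) z, z⟫ =
          ⟪W (z - Q z), z - Q z⟫ + ⟪W (γ z), γ z⟫) := by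
    intro M₁ M₂ D γ hM₁ hM₂ ho hγ₂ hγ₁ hDapp
    have ho' : ∀ a ∈ M₁, ∀ b ∈ M₂, ⟪W a, b⟫ = 0 := by
      intro a ha b hb
      rw [Wsymm, ← inner_conj_symm, ho b hb a ha, map_zero]
    have hQγ : ∀ z, Q (γ z) = γ z := fun z => hQfix _ (hM₂ (hγ₂ z))
    have hexp2g : ∀ a ∈ M₁, ∀ b ∈ M₂, ⟪W (a + b), a + b⟫ = ⟪W a, a⟫ + ⟪W b, b⟫ := by
      intro a ha b hb
      rw [map_add, inner_add_left, inner_add_right, inner_add_right,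
        ho' a ha b hb, ho b hb a ha]
      ring
    have hQγ' : ∀ z, Q (Q z - γ z) = Q z - γ z := fun z => hQfix _ (hM₁ (hγ₁ z))
    -- inner products against D
    have hDinner : ∀ z y, ⟪D z, y⟫ = ⟪W (γ z), γ y⟫ := by
      intro z y
      rw [hDapp]
      have hy : ⟪W (γ z), y - Q y⟫ + (⟪W (γ z), Q y - γ y⟫ + ⟪W (γ z), γ y⟫)
          = ⟪W (γ z), y⟫ := by
        rw [← inner_add_right, ← inner_add_right]
        congr 1
        abel
      rw [← hy, hQW' _ _ (hQu y) (hQγ z), ho (γ z) (hγ₂ z) _ (hγ₁ y)]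
      ring
    have hDsa : IsSelfAdjoint D := by
      rw [ContinuousLinearMap.isSelfAdjoint_iff_isSymmetric]
      intro x y
      calc ⟪D x, y⟫ = ⟪W (γ x), γ y⟫ := hDinner x y
      _ = ⟪γ x, W (γ y)⟫ := Wsymm _ _
      _ = (starRingEnd ℂ) ⟪W (γ y), γ x⟫ := (inner_conj_symm _ _).symm
      _ = (starRingEnd ℂ) ⟪D y, x⟫ := by rw [hDinner y x]
      _ = ⟪x, D y⟫ := inner_conj_symm _ _
    -- decomposition of quadratic forms
    have hWz : ∀ z, ⟪W z, z⟫ = ⟪W (z - Q z), z - Q z⟫ + ⟪W (Q z), Q z⟫ := by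
      intro z
      have h := hexp (z - Q z) (Q z) (hQu z) (hQQ z)
      rwa [sub_add_cancel] at h
    have hWQz : ∀ z, ⟪W (Q z), Q z⟫ =
        ⟪W (Q z - γ z), Q z - γ z⟫ + ⟪W (γ z), γ z⟫ := by
      intro z
      have h := hexp2g _ (hγ₁ z) _ (hγ₂ z)
      rwa [sub_add_cancel] at h
    have hWQzz : ∀ z, ⟪W (Q z), z⟫ = ⟪W (Q z), Q z⟫ := by
      intro z
      have h : ⟪W (Q z), z - Q z⟫ + ⟪W (Q z), Q z⟫ = ⟪W (Q z), z⟫ := by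
        rw [← inner_add_right, sub_add_cancel]
      rw [← h, hQW' _ _ (hQu z) (hQQ z), zero_add]
    have hform : ∀ z, ⟪(W - W ∘L Q + D) z, z⟫ =
        ⟪W (z - Q z), z - Q z⟫ + ⟪W (γ z), γ z⟫ := by
      intro z
      simp only [add_apply, sub_apply, comp_apply, inner_add_left, inner_sub_left]
      rw [hDinner z z, hWz z, hWQzz z, hWQz z]
      ring
    have hform2 : ∀ z, ⟪(W ∘L Q - D) z, z⟫ = ⟪W (Q z - γ z), Q z - γ z⟫ := by
      intro z
      simp only [sub_apply, comp_apply, inner_sub_left]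
      rw [hDinner z z, hWQzz z, hWQz z]
      ring
    have hSigsa : IsSelfAdjoint (W - W ∘L Q + D) := (hWsa.sub hQsa).add hDsa
    refine ⟨⟨?_, ?_, ?_⟩, hform⟩
    · refine hpos' _ hSigsa ?_
      intro v
      rw [hform v]
      simp only [Complex.add_re]
      have := hpos W hW (v - Q v)
      have := hpos W hW (γ v)
      linarith
    · have hWsub : W - (W - W ∘L Q + D) = W ∘L Q - D := by abel
      rw [hWsub]
      refine hpos' _ (hQsa.sub hDsa) ?_
      intro v
      rw [hform2 v]
      exact hpos W hW _
    · rintro v ⟨z, rfl⟩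
      refine (Submodule.mem_orthogonal _ _).mpr ?_
      intro a ha
      have hval : ⟪(W - W ∘L Q + D) z, a⟫ = 0 := by
        have hrw : (W - W ∘L Q + D) z = W (z - Q z) + W (γ z) := by
          simp only [add_apply, sub_apply, comp_apply]
          rw [← map_sub, hDapp]
        rw [hrw, inner_add_left, hQW'' _ _ (hQu z) (hQfix a (hM₁ ha)),
          ho (γ z) (hγ₂ z) a ha, add_zero]
      rw [← inner_conj_symm, ContinuousLinearMap.coe_coe, hval, map_zero]
  -- instantiate the construction three times
  have hA := main MA MB DB β hMAN hMBN horth hβB hβA hDBapp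
  have hBmain := main MB MA (W ∘L Q - DB) (fun x => Q x - β x) hMBN hMAN horth'
    (fun z => hβA z) (fun z => by simpa using hβB z) hDAapp
  have hN0 := main N ⊥ 0 (fun _ => 0) le_rfl bot_le
    (by
      intro b hb a ha
      rw [(Submodule.mem_bot ℂ).mp hb, map_zero, inner_zero_left])
    (fun z => Submodule.zero_mem _)
    (fun z => by rw [sub_zero]; exact hQxN z)
    (fun z => by rw [zero_apply, map_zero])
  -- the quadratic-form upper bound valid for every element of MSet
  have hupper : ∀ (S' : Submodule ℂ H) (X : H →L[ℂ] H), X ∈ MSet W S' →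
      ∀ (x s : H), s ∈ S' → (⟪X x, x⟫).re ≤ (⟪W (x - s), x - s⟫).re := by
    intro S' X hX x s hs
    obtain ⟨hXpos, hWXpos, hXr⟩ := hX
    have hXs : X s = 0 := by
      apply pos_app_zero hXpos
      have h1 : ⟪s, X s⟫ = 0 :=
        (Submodule.mem_orthogonal _ _).mp (hXr (LinearMap.mem_range_self (X : H →ₗ[ℂ] H) s)) s hs
      rw [← inner_conj_symm, h1, map_zero]
      simp
    have h3 : ⟪X x, s⟫ = 0 := by
      have hsym := hXpos.1 x s
      simp only [ContinuousLinearMap.coe_coe] at hsym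
      rw [hsym, hXs, inner_zero_right]
    have h2 : ⟪X (x - s), x - s⟫ = ⟪X x, x⟫ := by
      rw [map_sub, hXs, sub_zero, inner_sub_right, h3, sub_zero]
    have h4 := hpos _ hWXpos (x - s)
    simp only [sub_apply, inner_sub_left, Complex.sub_re] at h4
    rw [← h2]
    linarith
  -- the lower bound from maximality of a shorted operator
  have hsq : ∀ (S' : Submodule ℂ H) (T Y : H →L[ℂ] H), IsShorted W S' T →
      Y ∈ MSet W S' → ∀ x, (⟪Y x, x⟫).re ≤ (⟪T x, x⟫).re := by
    intro S' T Y hT hSig x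
    have h := hpos _ (hT.2 Y hSig) x
    simp only [sub_apply, inner_sub_left, Complex.sub_re] at h
    linarith
  -- per-point values of the three shorted operators
  have eqTAB : ∀ x, (⟪TAB x, x⟫).re = (⟪W (x - Q x), x - Q x⟫).re := by
    intro x
    refine le_antisymm (hupper N TAB hTAB.1 x (Q x) (hQxN x)) ?_
    have h := hsq N TAB _ hTAB hN0.1 x
    rw [hN0.2 x] at h
    simpa using h
  have eqTA : ∀ x, (⟪TA x, x⟫).re =
      (⟪W (x - Q x), x - Q x⟫).re + (⟪W (β x), β x⟫).re := by
    intro x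
    have hup := hupper MA TA hTA.1 x (Q x - β x) (hβA x)
    have heq : x - (Q x - β x) = (x - Q x) + β x := by abel
    rw [heq, hexp (x - Q x) (β x) (hQu x) (hQβ x)] at hup
    have hlo := hsq MA TA _ hTA hA.1 x
    rw [hA.2 x] at hlo
    simp only [Complex.add_re] at hup hlo ⊢
    linarith
  have eqTB : ∀ x, (⟪TB x, x⟫).re =
      (⟪W (x - Q x), x - Q x⟫).re + (⟪W (Q x - β x), Q x - β x⟫).re := by
    intro x
    have hup := hupper MB TB hTB.1 x (β x) (hβB x)
    have heq : x - β x = (x - Q x) + (Q x - β x) := by abel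
    rw [heq, hexp (x - Q x) (Q x - β x) (hQu x) (hQα x)] at hup
    have hlo := hsq MB TB _ hTB hBmain.1 x
    rw [hBmain.2 x] at hlo
    simp only [Complex.add_re] at hup hlo ⊢
    linarith
  have eqW : ∀ x, (⟪W x, x⟫).re = (⟪W (x - Q x), x - Q x⟫).re +
      ((⟪W (Q x - β x), Q x - β x⟫).re + (⟪W (β x), β x⟫).re) := by
    intro x
    have h1 := hexp (x - Q x) (Q x) (hQu x) (hQQ x)
    rw [sub_add_cancel] at h1
    have h2 := hexp2 _ (hβA x) _ (hβB x)
    rw [sub_add_cancel] at h2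
    rw [h1, h2]
    simp [Complex.add_re]
  -- selfadjointness of all operators involved
  have hTABsa : IsSelfAdjoint TAB := hTAB.1.1.isSelfAdjoint
  have hTAsa : IsSelfAdjoint TA := hTA.1.1.isSelfAdjoint
  have hTBsa : IsSelfAdjoint TB := hTB.1.1.isSelfAdjoint
  -- conclusion via vanishing of a selfadjoint operator's quadratic form
  have hzero : ∀ x : H, ⟪(((W - TA) + (W - TB)) - (W - TAB)) x, x⟫ = 0 := by
    intro x
    have hZsa : IsSelfAdjoint (((W - TA) + (W - TB)) - (W - TAB)) :=
      ((hWsa.sub hTAsa).add (hWsa.sub hTBsa)).sub (hWsa.sub hTABsa)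
    have hre : (⟪(((W - TA) + (W - TB)) - (W - TAB)) x, x⟫).re = 0 := by
      simp only [sub_apply, add_apply, inner_sub_left, inner_add_left,
        Complex.sub_re, Complex.add_re]
      have e1 := eqTAB x
      have e2 := eqTA x
      have e3 := eqTB x
      have e4 := eqW x
      linarith
    have hconj : (starRingEnd ℂ) ⟪(((W - TA) + (W - TB)) - (W - TAB)) x, x⟫ =
        ⟪(((W - TA) + (W - TB)) - (W - TAB)) x, x⟫ := by
      rw [inner_conj_symm]
      exact (hZsa.isSymmetric x x).symm
    have him := Complex.conj_eq_iff_im.mp hconj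
    exact Complex.ext (by simpa using hre) (by simpa using him)
  have hZ0 : (((W - TA) + (W - TB)) - (W - TAB) : H →L[ℂ] H) = 0 := by
    have h := (inner_map_self_eq_zero
      ((((W - TA) + (W - TB)) - (W - TAB) : H →L[ℂ] H) : H →ₗ[ℂ] H)).mp
      (fun x => hzero x)
    exact ContinuousLinearMap.coe_injective (by rw [h]; rfl)
  have := sub_eq_zero.mp hZ0
  exact this.symm
end
end
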